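/- Every N-set is contained in an F_σ N-set which is a proper subgroup of (ℝ,+). -/

import Mathlib

open MeasureTheory Filter Set

/-- Distance from a real number to the nearest integer. -/
noncomputable def nintDist (x : ℝ) : ℝ := |x - round x|

/-- `E` is a Dirichlet set. -/
def IsDirichlet (E : Set ℝ) : Prop :=
  ∃ n : ℕ → ℕ, StrictMono n ∧ ∀ x ∈ E, ∀ k : ℕ, nintDist (n k * x) ≤ (1/2) ^ k

/-- `E` is a pseudo-Dirichlet set. -/
def IsPseudoDirichlet (E : Set ℝ) : Prop :=
  ∃ n : ℕ → ℕ, StrictMono n ∧ ∀ x ∈ E, ∀ᶠ k in atTop, nintDist (n k * x) ≤ (1/2) ^ k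

/-- `E` is an Arbault set. -/
def IsArbault (E : Set ℝ) : Prop :=
  ∃ n : ℕ → ℕ, StrictMono n ∧ ∀ x ∈ E,
    Tendsto (fun k => nintDist (n k * x)) atTop (nhds 0)

/-- `E` is an N-set. -/
def IsNSet (E : Set ℝ) : Prop :=
  ∃ a : ℕ → ℝ, (∀ n, 0 ≤ a n) ∧ ¬ Summable a ∧
    ∀ x ∈ E, Summable (fun n => a n * nintDist (n * x))

/-- `s` is an Fσ set: a countable union of closed sets. -/
def IsFsigma (s : Set ℝ) : Prop :=
  ∃ f : ℕ → Set ℝ, (∀ n, IsClosed (f n)) ∧ s = ⋃ n, f n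

lemma nintDist_nonneg (x : ℝ) : 0 ≤ nintDist x := abs_nonneg _

lemma nintDist_le_half (x : ℝ) : nintDist x ≤ 1/2 := abs_sub_round x

/-- key: round is the nearest integer -/
lemma nintDist_le (x : ℝ) (m : ℤ) : nintDist x ≤ |x - m| := by
  rcases le_or_gt (1/2 : ℝ) (|x - m|) with h | h
  · exact (nintDist_le_half x).trans h
  · have hm : m = round x := by
      have h1 : |(m : ℝ) - round x| < 1 := by
        calc |(m : ℝ) - round x| ≤ |(m : ℝ) - x| + |x - round x| := abs_sub_le _ _ _
          _ < 1/2 + 1/2 := by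
              rw [abs_sub_comm]
              exact add_lt_add_of_lt_of_le h (abs_sub_round x)
          _ = 1 := by norm_num
      have h2 : |(m : ℝ) - round x| = ((|m - round x| : ℤ) : ℝ) := by
        push_cast
        ring_nf
      rw [h2] at h1
      have h3 : (|m - round x| : ℤ) < 1 := by exact_mod_cast h1
      have h4 := abs_lt.1 h3
      omega
    rw [hm]; exact le_of_eq rfl

lemma nintDist_zero : nintDist 0 = 0 := by simp [nintDist]

lemma nintDist_neg (x : ℝ) : nintDist (-x) = nintDist x := by
  have h1 : ∀ y : ℝ, nintDist (-y) ≤ nintDist y := fun y => by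
    calc nintDist (-y) ≤ |(-y) - ((-round y : ℤ) : ℝ)| := nintDist_le _ _
      _ = |y - round y| := by push_cast; rw [← abs_neg]; ring_nf
  refine le_antisymm (h1 x) ?_
  simpa using h1 (-x)

lemma nintDist_add_le (x y : ℝ) : nintDist (x + y) ≤ nintDist x + nintDist y := by
  calc nintDist (x + y) ≤ |(x + y) - ((round x + round y : ℤ) : ℝ)| := nintDist_le _ _
    _ = |(x - round x) + (y - round y)| := by push_cast; ring_nf
    _ ≤ _ := abs_add_le _ _

lemma nintDist_int_add (m : ℤ) (x : ℝ) : nintDist (m + x) = nintDist x := by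
  have key : ∀ (k : ℤ) (y : ℝ), nintDist (k + y) ≤ nintDist y := by
    intro k y
    calc nintDist (k + y) ≤ |(k + y) - ((k + round y : ℤ) : ℝ)| := nintDist_le _ _
      _ = |y - round y| := by push_cast; ring_nf
  refine le_antisymm (key m x) ?_
  have := key (-m) (m + x)
  simpa using this

lemma periodic_nintDist : Function.Periodic nintDist 1 := by
  intro x
  have := nintDist_int_add 1 x
  rw [add_comm] at this
  simpa using this

lemma nintDist_eq_infDist (x : ℝ) :
    nintDist x = Metric.infDist x (Set.range ((↑) : ℤ → ℝ)) := by
  refine le_antisymm ?_ ?_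
  · rw [Metric.infDist_eq_iInf]
    refine le_ciInf fun y => ?_
    obtain ⟨m, hm⟩ := y.2
    simpa [Real.dist_eq, ← hm] using nintDist_le x m
  · refine (Metric.infDist_le_dist_of_mem (Set.mem_range_self (round x))).trans_eq ?_
    simp [Real.dist_eq, nintDist]

lemma continuous_nintDist : Continuous nintDist := by
  have : nintDist = fun x => Metric.infDist x (Set.range ((↑) : ℤ → ℝ)) :=
    funext nintDist_eq_infDist
  rw [this]
  exact Metric.continuous_infDist_pt _

lemma intervalIntegrable_nintDist (a b : ℝ) : IntervalIntegrable nintDist volume a b :=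
  continuous_nintDist.intervalIntegrable a b

lemma round_eq_zero_of {x : ℝ} (h0 : 0 ≤ x) (h : x < 1/2) : round x = 0 := by
  rw [round_eq, Int.floor_eq_zero_iff]
  constructor <;> simp <;> linarith

lemma round_eq_one_of {x : ℝ} (h0 : 1/2 ≤ x) (h : x ≤ 1) : round x = 1 := by
  rw [round_eq]
  have : (1 : ℤ) ≤ ⌊x + 1/2⌋ := by
    rw [Int.le_floor]; push_cast; linarith
  have h2 : ⌊x + 1/2⌋ < 2 := by
    rw [Int.floor_lt]; push_cast; linarith
  omega

lemma integral_nintDist_unit : ∫ x in (0:ℝ)..1, nintDist x = 1/4 := by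
  have hsplit : (∫ x in (0:ℝ)..(1/2), nintDist x) + ∫ x in (1/2 : ℝ)..1, nintDist x
      = ∫ x in (0:ℝ)..1, nintDist x :=
    intervalIntegral.integral_add_adjacent_intervals (intervalIntegrable_nintDist _ _)
      (intervalIntegrable_nintDist _ _)
  have h1 : ∫ x in (0:ℝ)..(1/2), nintDist x = ∫ x in (0:ℝ)..(1/2), x := by
    refine intervalIntegral.integral_congr fun x hx => ?_
    rw [Set.uIcc_of_le (by norm_num : (0:ℝ) ≤ 1/2)] at hx
    obtain ⟨hx0, hx1⟩ := hx
    rcases lt_or_eq_of_le hx1 with h | h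
    · rw [nintDist, round_eq_zero_of hx0 h]; simpa using abs_of_nonneg hx0
    · subst h; rw [nintDist, round_eq_one_of le_rfl (by norm_num)]
      norm_num
  have h2 : ∫ x in (1/2 : ℝ)..1, nintDist x = ∫ x in (1/2:ℝ)..1, (1 - x) := by
    refine intervalIntegral.integral_congr fun x hx => ?_
    rw [Set.uIcc_of_le (by norm_num : (1/2:ℝ) ≤ 1)] at hx
    obtain ⟨hx0, hx1⟩ := hx
    rw [nintDist, round_eq_one_of hx0 hx1]
    rw [abs_of_nonpos (by push_cast; linarith)]
    push_cast; ring
  have e1 : ∫ x in (0:ℝ)..(1/2), x = 1/8 := by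
    rw [integral_id]; norm_num
  have e2 : ∫ x in (1/2:ℝ)..1, (1 - x) = 1/8 := by
    have : ∫ x in (1/2:ℝ)..1, (1 - x) = (∫ _ in (1/2:ℝ)..1, (1:ℝ)) - ∫ x in (1/2:ℝ)..1, x :=
      intervalIntegral.integral_sub intervalIntegrable_const
        (continuous_id.intervalIntegrable _ _)
    rw [this, integral_id, intervalIntegral.integral_const]
    norm_num
  rw [← hsplit, h1, h2, e1, e2]; norm_num

lemma integral_nintDist_period (t : ℝ) : ∫ x in t..t+1, nintDist x = 1/4 := by
  rw [periodic_nintDist.intervalIntegral_add_eq t 0]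
  simpa using integral_nintDist_unit

lemma integral_nintDist_periods (t : ℝ) (m : ℕ) :
    ∫ x in t..t + m, nintDist x = m * (1/4) := by
  have := periodic_nintDist.intervalIntegral_add_zsmul_eq (m : ℤ) t
    (intervalIntegrable_nintDist)
  rw [integral_nintDist_period] at this
  simpa using this

lemma key_integral (c δ : ℝ) (hδ : 0 < δ) (n : ℕ) (hn : 2/δ ≤ n) :
    δ/8 ≤ ∫ x in c..c+δ, nintDist (n * x) := by
  have hn0 : (0:ℝ) < n := lt_of_lt_of_le (by positivity) hn
  have hnδ : 2 ≤ (n:ℝ) * δ := by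
    rw [div_le_iff₀ hδ] at hn; linarith
  set m : ℕ := ⌊(n:ℝ) * δ⌋₊ with hm
  have hm1 : (m:ℝ) ≤ (n:ℝ) * δ := Nat.floor_le (by positivity)
  have hm2 : (n:ℝ) * δ - 1 < m := by
    have := Nat.lt_floor_add_one ((n:ℝ) * δ); linarith
  have hm3 : (n:ℝ) * δ / 2 ≤ m := by linarith
  have hcomp : ∫ x in c..c+δ, nintDist (n * x)
      = (n:ℝ)⁻¹ • ∫ u in (n:ℝ)*c..(n:ℝ)*(c+δ), nintDist u := by
    exact intervalIntegral.integral_comp_mul_left nintDist (ne_of_gt hn0)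
  have hmono : ∫ u in (n:ℝ)*c..(n:ℝ)*c + m, nintDist u
      ≤ ∫ u in (n:ℝ)*c..(n:ℝ)*(c+δ), nintDist u := by
    refine intervalIntegral.integral_mono_interval le_rfl
      (by linarith [Nat.cast_nonneg (α := ℝ) m] : (n:ℝ)*c ≤ (n:ℝ)*c + m)
      (by rw [mul_add]; linarith) ?_ (intervalIntegrable_nintDist _ _)
    filter_upwards with x using nintDist_nonneg x
  have hval := integral_nintDist_periods ((n:ℝ)*c) m
  rw [hcomp]
  rw [smul_eq_mul]
  have : δ/8 ≤ (n:ℝ)⁻¹ * (m * (1/4)) := by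
    rw [le_inv_mul_iff₀ hn0]
    calc (n:ℝ) * (δ/8) = ((n:ℝ) * δ / 2) * (1/4) := by ring
      _ ≤ m * (1/4) := by linarith
  calc δ/8 ≤ (n:ℝ)⁻¹ * (m * (1/4)) := this
    _ = (n:ℝ)⁻¹ * ∫ u in (n:ℝ)*c..(n:ℝ)*c + m, nintDist u := by rw [hval]
    _ ≤ _ := by
        apply mul_le_mul_of_nonneg_left hmono (by positivity)

set_option maxHeartbeats 1000000 in
theorem stmt12 (E : Set ℝ) (hE : IsNSet E) :
    ∃ G : AddSubgroup ℝ, E ⊆ (G : Set ℝ) ∧ IsNSet (G : Set ℝ) ∧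
      IsFsigma (G : Set ℝ) ∧ (G : Set ℝ) ≠ Set.univ := by
  obtain ⟨a, ha0, haS, haE⟩ := hE
  set g : ℕ → ℝ → ℝ := fun n x => a n * nintDist (n * x) with hg
  have hgnn : ∀ n x, 0 ≤ g n x := fun n x => mul_nonneg (ha0 n) (nintDist_nonneg _)
  have hgcont : ∀ n, Continuous (g n) := fun n =>
    continuous_const.mul (continuous_nintDist.comp (continuous_const.mul continuous_id))
  refine ⟨{ carrier := {x | Summable fun n => g n x}
            zero_mem' := by simp [hg, nintDist_zero, summable_zero]
            add_mem' := by
              intro x y hx hy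
              refine Summable.of_nonneg_of_le (fun n => hgnn n _) (fun n => ?_)
                ((hx : Summable _).add hy)
              simp only [hg]
              rw [← mul_add]
              refine mul_le_mul_of_nonneg_left ?_ (ha0 n)
              rw [mul_add]
              exact nintDist_add_le _ _
            neg_mem' := by
              intro x hx
              have : ∀ n : ℕ, g n (-x) = g n x := by
                intro n
                simp only [hg, mul_neg, nintDist_neg]
              simpa [this] using (hx : Summable _) }, ?_, ?_, ?_, ?_⟩
  · intro x hx; exact haE x hx
  · exact ⟨a, ha0, haS, fun x hx => hx⟩
  · -- Fsigma
    refine ⟨fun M => ⋂ N : ℕ, {x | ∑ n ∈ Finset.range N, g n x ≤ M}, fun M => ?_, ?_⟩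
    · exact isClosed_iInter fun N =>
        isClosed_le (continuous_finset_sum _ fun i _ => hgcont i) continuous_const
    · ext x
      simp only [AddSubgroup.coe_set_mk, mem_setOf_eq, mem_iUnion, mem_iInter]
      constructor
      · intro hx
        refine ⟨⌈∑' n, g n x⌉₊, fun N => ?_⟩
        calc ∑ n ∈ Finset.range N, g n x ≤ ∑' n, g n x :=
              Summable.sum_le_tsum _ (fun i _ => hgnn i x) hx
          _ ≤ ⌈∑' n, g n x⌉₊ := Nat.le_ceil _
      · rintro ⟨M, hM⟩
        exact summable_of_sum_range_le (fun n => hgnn n x) hM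
  · -- proper
    intro hG
    have hcover : (⋃ M : ℕ, ⋂ N : ℕ, {x : ℝ | ∑ n ∈ Finset.range N, g n x ≤ M}) = univ := by
      rw [eq_univ_iff_forall]
      intro x
      have hx : Summable fun n => g n x := by
        have : x ∈ ({x | Summable fun n => g n x} : Set ℝ) := by
          rw [show ({x | Summable fun n => g n x} : Set ℝ) = univ from hG]; trivial
        exact this
      simp only [mem_iUnion, mem_iInter, mem_setOf_eq]
      exact ⟨⌈∑' n, g n x⌉₊, fun N =>
        (Summable.sum_le_tsum _ (fun i _ => hgnn i x) hx).trans (Nat.le_ceil _)⟩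
    obtain ⟨M, hM⟩ := nonempty_interior_of_iUnion_of_closed
      (fun M => isClosed_iInter fun N =>
        isClosed_le (continuous_finset_sum _ fun i _ => hgcont i) continuous_const) hcover
    obtain ⟨c, hc⟩ := hM
    obtain ⟨ε, hε, hball⟩ := Metric.isOpen_iff.1 isOpen_interior c hc
    set δ : ℝ := ε/2 with hδdef
    have hδ : 0 < δ := by positivity
    have hbound : ∀ x ∈ Icc c (c + δ), ∀ N, ∑ n ∈ Finset.range N, g n x ≤ M := by
      intro x hx N
      have hxball : x ∈ Metric.ball c ε := by
        rw [Metric.mem_ball, Real.dist_eq, abs_sub_lt_iff]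
        obtain ⟨h1, h2⟩ := hx
        constructor <;> [linarith [half_lt_self hε]; linarith]
      have := interior_subset (hball hxball)
      simp only [mem_iInter, mem_setOf_eq] at this
      exact this N
    -- integral bound
    have hInt : ∀ n, IntervalIntegrable (g n) volume c (c + δ) := fun n =>
      (hgcont n).intervalIntegrable _ _
    have hkey : ∀ N, ∑ n ∈ Finset.range N, ∫ x in c..c+δ, g n x ≤ M * δ := by
      intro N
      have h1 : ∑ n ∈ Finset.range N, ∫ x in c..c+δ, g n x
          = ∫ x in c..c+δ, ∑ n ∈ Finset.range N, g n x :=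
        (intervalIntegral.integral_finset_sum (fun i _ => hInt i)).symm
      rw [h1]
      calc ∫ x in c..c+δ, ∑ n ∈ Finset.range N, g n x
          ≤ ∫ _ in c..c+δ, (M:ℝ) :=
            intervalIntegral.integral_mono_on (by linarith)
              ((continuous_finset_sum _ fun i _ => hgcont i).intervalIntegrable _ _)
              intervalIntegrable_const (fun x hx => hbound x hx N)
        _ = M * δ := by rw [intervalIntegral.integral_const]; simp; ring
    set n₀ : ℕ := ⌈2/δ⌉₊ with hn₀
    have hterm : ∀ n, n₀ ≤ n → a n * (δ/8) ≤ ∫ x in c..c+δ, g n x := by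
      intro n hn
      have h2δ : 2/δ ≤ (n:ℝ) := le_trans (Nat.le_ceil _) (by exact_mod_cast hn)
      have := key_integral c δ hδ n h2δ
      calc a n * (δ/8) ≤ a n * ∫ x in c..c+δ, nintDist (n * x) :=
            mul_le_mul_of_nonneg_left this (ha0 n)
        _ = ∫ x in c..c+δ, g n x := by
            rw [← intervalIntegral.integral_const_mul]
    have hintnn : ∀ n, 0 ≤ ∫ x in c..c+δ, g n x := fun n =>
      intervalIntegral.integral_nonneg (by linarith) (fun u _ => hgnn n u)
    have hsumbound : ∀ N, ∑ n ∈ Finset.range N, a n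
        ≤ (∑ n ∈ Finset.range n₀, a n) + (M * δ) / (δ/8) := by
      intro N
      rcases le_or_gt N n₀ with h | h
      · have h1 : ∑ n ∈ Finset.range N, a n ≤ ∑ n ∈ Finset.range n₀, a n :=
          Finset.sum_le_sum_of_subset_of_nonneg
            (Finset.range_subset_range.2 h) (fun i _ _ => ha0 i)
        have h2 : 0 ≤ (M * δ) / (δ/8) := by positivity
        linarith
      · have hsplit : ∑ n ∈ Finset.range N, a n
            = (∑ n ∈ Finset.range n₀, a n) + ∑ n ∈ Finset.Ico n₀ N, a n := by
          rw [Finset.range_eq_Ico, Finset.range_eq_Ico]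
          exact (Finset.sum_Ico_consecutive (f := a) (Nat.zero_le _) h.le).symm
        rw [hsplit]
        have h3 : (∑ n ∈ Finset.Ico n₀ N, a n) * (δ/8)
            ≤ ∑ n ∈ Finset.Ico n₀ N, ∫ x in c..c+δ, g n x := by
          rw [Finset.sum_mul]
          exact Finset.sum_le_sum fun i hi => hterm i (Finset.mem_Ico.1 hi).1
        have h4 : ∑ n ∈ Finset.Ico n₀ N, ∫ x in c..c+δ, g n x
            ≤ ∑ n ∈ Finset.range N, ∫ x in c..c+δ, g n x := by
          rw [Finset.range_eq_Ico]
          exact Finset.sum_le_sum_of_subset_of_nonneg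
            (Finset.Ico_subset_Ico (Nat.zero_le _) le_rfl) (fun i _ _ => hintnn i)
        have h5 := hkey N
        have h6 : (∑ n ∈ Finset.Ico n₀ N, a n) ≤ (M * δ) / (δ/8) := by
          rw [le_div_iff₀ (by positivity)]
          linarith
        linarith
    exact haS (summable_of_sum_range_le ha0 hsumbound)
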